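/- Every edge-coloured graph G satisfies t(C_6^A, G) ≤ (1/2)^6, where t denotes the (not necessarily injective) colour-preserving homomorphism density. -/

import Mathlib

open SimpleGraph Function

/-- An edge-coloured graph: a simple graph together with a symmetric colour function
(`true` = red, `false` = blue). -/
structure ECGraph (V : Type*) where
  graph : SimpleGraph V
  color : V → V → Bool
  color_symm : ∀ u v, color u v = color v u

/-- A colour-preserving homomorphism of edge-coloured graphs. -/
def IsHom {α β : Type*} (H : ECGraph α) (G : ECGraph β) (f : α → β) : Prop :=
  ∀ u v, H.graph.Adj u v → G.graph.Adj (f u) (f v) ∧ G.color (f u) (f v) = H.color u v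

/-- Homomorphism density `t(H,G) = hom(H,G)/v(G)^{v(H)}`. -/
noncomputable def homDensity {α β : Type*} [Fintype α] [Fintype β]
    (H : ECGraph α) (G : ECGraph β) : ℝ :=
  (Nat.card {f : α → β // IsHom H G f} : ℝ) / (Fintype.card β : ℝ) ^ (Fintype.card α)

/-- Injective homomorphism density
`t_inj(H,G) = hom_inj(H,G)·(v(G)-v(H))!/v(G)!`. -/
noncomputable def injDensity {α β : Type*} [Fintype α] [Fintype β]
    (H : ECGraph α) (G : ECGraph β) : ℝ :=
  (Nat.card {f : α → β // Injective f ∧ IsHom H G f} : ℝ) *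
    (Nat.factorial (Fintype.card β - Fintype.card α)) / (Nat.factorial (Fintype.card β))

/-- The alternating 6-cycle `C_6^A`: the 6-cycle with edges coloured alternately
red and blue, so that every vertex is incident to one red and one blue edge. -/
def C6A : ECGraph (Fin 6) where
  graph := cycleGraph 6
  color u v := decide ((v = u + 1 ∧ Even u.val) ∨ (u = v + 1 ∧ Even v.val))
  color_symm u v := by rw [decide_eq_decide]; tauto


open Finset

namespace AltC6

variable {V : Type} [Fintype V]

/-- row sums -/
def dd (w : V → V → ℝ) (x : V) : ℝ := ∑ y, w x y
def W2 (w : V → V → ℝ) (x y : V) : ℝ := ∑ z, w x z * w z y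
def sig (w : V → V → ℝ) : ℝ := ∑ x, dd w x
def AA (w : V → V → ℝ) : ℝ := ∑ x, dd w x ^ 2
def ee (w : V → V → ℝ) (x : V) : ℝ := ∑ y, w x y * dd w y
def PP (w : V → V → ℝ) : ℝ := ∑ x, ee w x ^ 2
def tau (w : V → V → ℝ) : ℝ := ∑ x, dd w x * ee w x
def FF (w : V → V → ℝ) : ℝ := ∑ x, ∑ y, w x y ^ 2

section basic
variable (w : V → V → ℝ)

lemma W2_symm (hsym : ∀ x y, w x y = w y x) (x y : V) : W2 w x y = W2 w y x := by
  unfold W2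
  refine Finset.sum_congr rfl fun z _ => ?_
  rw [hsym x z, hsym z y]; ring

lemma sum_W2_right (x : V) : ∑ y, W2 w x y = ee w x := by
  unfold W2 ee
  rw [Finset.sum_comm]
  refine Finset.sum_congr rfl fun z _ => ?_
  rw [← Finset.mul_sum]; rfl

lemma sum_W2_left (hsym : ∀ x y, w x y = w y x) (y : V) : ∑ x, W2 w x y = ee w y := by
  rw [← sum_W2_right w y]
  exact Finset.sum_congr rfl fun x _ => W2_symm w hsym x y

lemma sum_ee (hsym : ∀ x y, w x y = w y x) : ∑ x, ee w x = AA w := by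
  unfold ee AA
  rw [Finset.sum_comm]
  refine Finset.sum_congr rfl fun y _ => ?_
  rw [← Finset.sum_mul]
  have : ∑ x, w x y = dd w y := by
    unfold dd; exact Finset.sum_congr rfl fun x _ => hsym x y
  rw [this]; ring

/-- `∑_y W2 x y * dd y = ∑_y w x y * ee y` (both are `(W³1) x`). -/
lemma sum_W2_dd (x : V) : ∑ y, W2 w x y * dd w y = ∑ y, w x y * ee w y := by
  unfold W2 ee
  simp_rw [Finset.sum_mul, Finset.mul_sum, mul_assoc]
  rw [Finset.sum_comm]

/-- `dᵀ W² d = P` -/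
lemma dWWd (hsym : ∀ x y, w x y = w y x) : ∑ x, dd w x * (∑ y, W2 w x y * dd w y) = PP w := by
  have h1 : ∀ x, ∑ y, W2 w x y * dd w y = ∑ y, w x y * ee w y := sum_W2_dd w
  simp_rw [h1]
  unfold PP
  have h2 : ∀ x, dd w x * ∑ y, w x y * ee w y = ∑ y, (w x y * dd w x) * ee w y := by
    intro x; rw [Finset.mul_sum]; exact Finset.sum_congr rfl fun y _ => by ring
  simp_rw [h2]
  rw [Finset.sum_comm]
  refine Finset.sum_congr rfl fun y _ => ?_
  rw [← Finset.sum_mul]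
  have : ∑ x, w x y * dd w x = ee w y := by
    unfold ee; exact Finset.sum_congr rfl fun x _ => by rw [hsym x y]
  rw [this]; ring

end basic

section ineq
variable (w : V → V → ℝ)

/-- card as a real -/
def nn (V : Type) [Fintype V] : ℝ := Fintype.card V

lemma nn_nonneg : 0 ≤ nn V := Nat.cast_nonneg _

lemma row_sq (hb : ∀ x y, w x y ^ 2 ≤ 1) (x : V) : ∑ y, w x y ^ 2 ≤ nn V := by
  have h : ∑ y, w x y ^ 2 ≤ ∑ _y : V, (1 : ℝ) := Finset.sum_le_sum fun y _ => hb x y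
  simpa [nn] using h

lemma FF_le (hb : ∀ x y, w x y ^ 2 ≤ 1) : FF w ≤ nn V ^ 2 := by
  have h : FF w ≤ ∑ _x : V, nn V := Finset.sum_le_sum fun x _ => row_sq w hb x
  have h2 : ∑ _x : V, nn V = nn V ^ 2 := by
    rw [Finset.sum_const, Finset.card_univ, nsmul_eq_mul, nn]; ring
  linarith [h, h2.le]

lemma opnorm (hb : ∀ x y, w x y ^ 2 ≤ 1) (u : V → ℝ) :
    ∑ x, (∑ y, w x y * u y) ^ 2 ≤ nn V ^ 2 * ∑ x, u x ^ 2 := by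
  have hu : 0 ≤ ∑ x, u x ^ 2 := Finset.sum_nonneg fun x _ => sq_nonneg _
  have hx : ∀ x : V, (∑ y, w x y * u y) ^ 2 ≤ nn V * ∑ y, u y ^ 2 := by
    intro x
    calc (∑ y, w x y * u y) ^ 2 ≤ (∑ y, w x y ^ 2) * ∑ y, u y ^ 2 :=
          Finset.sum_mul_sq_le_sq_mul_sq _ _ _
      _ ≤ nn V * ∑ y, u y ^ 2 := by
          have := row_sq w hb x
          exact mul_le_mul_of_nonneg_right this hu
  calc ∑ x, (∑ y, w x y * u y) ^ 2 ≤ ∑ _x : V, nn V * ∑ y, u y ^ 2 :=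
        Finset.sum_le_sum fun x _ => hx x
    _ = nn V ^ 2 * ∑ x, u x ^ 2 := by
        rw [Finset.sum_const, Finset.card_univ, nsmul_eq_mul, nn]; ring

lemma AA_le (hb : ∀ x y, w x y ^ 2 ≤ 1) : AA w ≤ nn V ^ 3 := by
  have h := opnorm w hb (fun _ => (1 : ℝ))
  simp only [mul_one, one_pow] at h
  have h2 : ∑ _x : V, (1 : ℝ) = nn V := by simp [nn]
  unfold AA dd
  calc ∑ x, (∑ y, w x y) ^ 2 ≤ nn V ^ 2 * ∑ _x : V, (1:ℝ) := h
    _ = nn V ^ 3 := by rw [h2]; ring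

lemma sig_sq (_hb : ∀ x y, w x y ^ 2 ≤ 1) : sig w ^ 2 ≤ nn V * AA w := by
  have h : (∑ x, (1:ℝ) * dd w x) ^ 2 ≤ (∑ _x : V, (1:ℝ)^2) * ∑ x, dd w x ^ 2 :=
    Finset.sum_mul_sq_le_sq_mul_sq _ _ _
  simpa [sig, AA, nn] using h

lemma PP_le_FA : PP w ≤ FF w * AA w := by
  have hA : 0 ≤ ∑ y, dd w y ^ 2 := Finset.sum_nonneg fun x _ => sq_nonneg _
  have hx : ∀ x : V, ee w x ^ 2 ≤ (∑ y, w x y ^ 2) * AA w := by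
    intro x
    have := Finset.sum_mul_sq_le_sq_mul_sq Finset.univ (fun y => w x y) (fun y => dd w y)
    simpa [ee, AA] using this
  calc PP w ≤ ∑ x, (∑ y, w x y ^ 2) * AA w := Finset.sum_le_sum fun x _ => hx x
    _ = FF w * AA w := by rw [← Finset.sum_mul]; rfl

lemma PP_le (hb : ∀ x y, w x y ^ 2 ≤ 1) : PP w ≤ nn V ^ 2 * AA w := by
  have h := opnorm w hb (dd w)
  simpa [PP, ee, AA] using h

lemma tau_sq : tau w ^ 2 ≤ AA w * PP w := by
  have := Finset.sum_mul_sq_le_sq_mul_sq Finset.univ (fun x => dd w x) (fun x => ee w x)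
  simpa [tau, AA, PP] using this

/-- Cauchy–Schwarz for the PSD form `n²⟨·,·⟩ − ⟨W·,W·⟩` applied to `1` and `d`. -/
lemma C1 (hb : ∀ x y, w x y ^ 2 ≤ 1) :
    (nn V ^ 2 * sig w - tau w) ^ 2 ≤ (nn V ^ 3 - AA w) * (nn V ^ 2 * AA w - PP w) := by
  set n := nn V
  -- quadratic in t : (n²A−P) t² + 2(n²σ−τ) t + (n³−A) ≥ 0
  have key : ∀ t : ℝ, 0 ≤ (n^2*AA w - PP w) * (t*t) + (2*(n^2*sig w - tau w)) * t
      + (n^3 - AA w) := by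
    intro t
    have h := opnorm w hb (fun y => t * dd w y + 1)
    have e1 : ∀ x, (∑ y, w x y * (t * dd w y + 1)) = t * ee w x + dd w x := by
      intro x
      have : ∀ y, w x y * (t * dd w y + 1) = t * (w x y * dd w y) + w x y := fun y => by ring
      simp_rw [this, Finset.sum_add_distrib, ← Finset.mul_sum]
      rfl
    simp_rw [e1] at h
    have e2 : ∑ x, (t * ee w x + dd w x) ^ 2
        = t^2 * PP w + 2*t*(tau w) + AA w := by
      have : ∀ x, (t * ee w x + dd w x) ^ 2
          = t^2 * ee w x ^2 + 2*t*(dd w x * ee w x) + dd w x ^2 := fun x => by ring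
      simp_rw [this, Finset.sum_add_distrib, ← Finset.mul_sum]
      rfl
    have e3 : ∑ x, (t * dd w x + 1) ^ 2 = t^2 * AA w + 2*t*(sig w) + nn V := by
      have : ∀ x : V, (t * dd w x + 1) ^ 2
          = t^2 * dd w x ^2 + 2*t*(dd w x) + 1 := fun x => by ring
      simp_rw [this, Finset.sum_add_distrib, ← Finset.mul_sum]
      simp [AA, sig, nn]
    rw [e2, e3] at h
    nlinarith [h]
  have hd := discrim_le_zero key
  rw [discrim] at hd
  nlinarith [hd]

lemma C2a (hsym : ∀ x y, w x y = w y x) :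
    2 * PP w * AA w ≤ FF w * AA w ^ 2 + tau w ^ 2 := by
  have hAnn : (0:ℝ) ≤ AA w := Finset.sum_nonneg (fun (x:V) _ => sq_nonneg (dd w x))
  rcases eq_or_lt_of_le hAnn with hA | hA
  · -- A = 0 : d ≡ 0, hence e ≡ 0, P = 0, τ = 0
    have hA0 : AA w = 0 := hA.symm
    have hd : ∀ x, dd w x = 0 := by
      intro x
      have h0 : ∀ i ∈ Finset.univ, (0:ℝ) ≤ dd w i ^ 2 := fun i _ => sq_nonneg _
      have hs : ∑ i, dd w i ^ 2 = 0 := hA0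
      have := (Finset.sum_eq_zero_iff_of_nonneg h0).mp hs x (Finset.mem_univ x)
      exact pow_eq_zero_iff (n := 2) (by norm_num) |>.mp this
    have he : ∀ x, ee w x = 0 := by
      intro x; unfold ee; simp [hd]
    have hP : PP w = 0 := by unfold PP; simp [he]
    have ht : tau w = 0 := by unfold tau; simp [he]
    rw [hP, ht, hA0]; norm_num
  · -- A > 0
    have hRAnn : 0 ≤ AA w * PP w - tau w ^ 2 := by
      have := tau_sq w; nlinarith
    rcases eq_or_lt_of_le hRAnn with hR | hR
    · -- degenerate: τ² = AP ; use P ≤ F·A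
      have hPF := PP_le_FA w
      have hτ : tau w ^ 2 = AA w * PP w := by linarith
      nlinarith [mul_le_mul_of_nonneg_right hPF hA.le]
    · set A := AA w with hAdef
      set P := PP w with hPdef
      set τ := tau w with htdef
      set RA : ℝ := A * P - τ ^ 2 with hRAdef
      set rr : V → ℝ := fun z => A * ee w z - τ * dd w z with hrr
      set γ : V → ℝ := fun x => ∑ z, w x z * rr z with hγ
      have e1 : ∑ z, dd w z * ee w z = τ := rfl
      have e2 : ∑ z, ee w z ^ 2 = P := rfl
      have e3 : ∑ z, dd w z ^ 2 = A := rfl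
      -- basic sums with rr
      have h_rr_d : ∑ z, rr z * dd w z = 0 := by
        have h : ∀ z, rr z * dd w z = A * (dd w z * ee w z) - τ * dd w z ^2 := fun z => by
          simp only [hrr]; ring
        simp_rw [h]
        simp only [Finset.sum_sub_distrib, ← Finset.mul_sum]
        rw [e1, e3]; ring
      have h_rr_e : ∑ z, rr z * ee w z = RA := by
        have h : ∀ z, rr z * ee w z = A * ee w z ^2 - τ * (dd w z * ee w z) := fun z => by
          simp only [hrr]; ring
        simp_rw [h]
        simp only [Finset.sum_sub_distrib, ← Finset.mul_sum]
        rw [e1, e2, hRAdef]; ring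
      have h_rr_sq : ∑ z, rr z ^ 2 = A * RA := by
        have h : ∀ z, rr z ^ 2 = A^2 * ee w z ^2 - 2*A*τ*(dd w z * ee w z)
            + τ^2 * dd w z ^2 := fun z => by simp only [hrr]; ring
        simp_rw [h]
        simp only [Finset.sum_add_distrib, Finset.sum_sub_distrib, ← Finset.mul_sum]
        rw [e1, e2, e3]; ring
      -- Bessel inequality per row x
      have bessel : ∀ x, RA * ee w x ^2 + γ x ^2 ≤ A * RA * ∑ z, w x z ^2 := by
        intro x
        have hrow_d : ∑ z, w x z * dd w z = ee w x := rfl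
        have hrow_r : ∑ z, w x z * rr z = γ x := rfl
        have expand : ∑ z, (A*RA*w x z - RA*ee w x*dd w z - γ x * rr z)^2
            = (A*RA)^2 * (∑ z, w x z ^2) + (RA*ee w x)^2 * A + γ x ^2 * (A*RA)
              - 2*(A*RA)*(RA*ee w x)*(ee w x) - 2*(A*RA)*(γ x)*(γ x) := by
          have h : ∀ z, (A*RA*w x z - RA*ee w x*dd w z - γ x * rr z)^2
              = (A*RA)^2 * w x z^2 + ((RA*ee w x)^2 * dd w z^2 + γ x^2 * rr z^2)
                - 2*(A*RA)*(RA*ee w x)*(w x z * dd w z)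
                - 2*(A*RA)*(γ x)*(w x z * rr z)
                + 2*(RA*ee w x)*(γ x)*(rr z * dd w z) := fun z => by ring
          simp_rw [h]
          simp only [Finset.sum_add_distrib, Finset.sum_sub_distrib]
          simp only [← Finset.mul_sum]
          rw [h_rr_d, h_rr_sq, hrow_d, hrow_r, e3]; ring
        have hpos : (0:ℝ) ≤ ∑ z, (A*RA*w x z - RA*ee w x*dd w z - γ x * rr z)^2 :=
          Finset.sum_nonneg fun z _ => sq_nonneg _
        rw [expand] at hpos
        have hAR : 0 < A * RA := mul_pos hA hR
        nlinarith [hpos, hAR]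
      -- sum over x
      have hsumb : RA * P + ∑ x, γ x ^2 ≤ A * RA * FF w := by
        have h := Finset.sum_le_sum (s := Finset.univ) fun (x:V) _ => bessel x
        rw [Finset.sum_add_distrib, ← Finset.mul_sum, ← Finset.mul_sum] at h
        rw [e2] at h
        exact h
      -- ⟨γ, d⟩ = RA and Cauchy–Schwarz
      have hγd : ∑ x, γ x * dd w x = RA := by
        have h : ∀ x, γ x * dd w x = ∑ z, rr z * (w x z * dd w x) := by
          intro x
          show (∑ z, w x z * rr z) * dd w x = _
          rw [Finset.sum_mul]
          exact Finset.sum_congr rfl fun z _ => by ring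
        simp_rw [h]
        rw [Finset.sum_comm]
        have h2 : ∀ z, ∑ x, rr z * (w x z * dd w x) = rr z * ee w z := by
          intro z
          rw [← Finset.mul_sum]
          congr 1
          show _ = ∑ y, w z y * dd w y
          exact Finset.sum_congr rfl fun x _ => by rw [hsym z x]
        simp_rw [h2]
        exact h_rr_e
      have hCS : RA ^ 2 ≤ (∑ x, γ x ^2) * A := by
        have h := Finset.sum_mul_sq_le_sq_mul_sq Finset.univ (fun x => γ x) (fun x => dd w x)
        rw [hγd] at h
        exact h.trans (le_of_eq (by rw [e3]))
      -- combine
      have hgnn : 0 ≤ ∑ x, γ x ^2 := Finset.sum_nonneg fun x _ => sq_nonneg _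
      have step : A * (RA * P) + RA^2 ≤ A * (A * RA * FF w) := by
        nlinarith [mul_le_mul_of_nonneg_left hsumb hA.le, hCS]
      have final : A * P + RA ≤ A ^ 2 * FF w := by nlinarith [step, hR, hA]
      -- 2PA ≤ FA² + τ²
      show 2 * P * A ≤ FF w * A ^ 2 + τ ^ 2
      nlinarith [final]

lemma core_ineq (hsym : ∀ x y, w x y = w y x) (hb : ∀ x y, w x y ^ 2 ≤ 1) :
    nn V ^2 * sig w ^2 - 2 * sig w * tau w - 2 * nn V ^3 * AA w + 2 * nn V * PP w
      + AA w ^2 ≤ 0 := by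
  have hA : 0 ≤ AA w := Finset.sum_nonneg fun x _ => sq_nonneg _
  have hALe := AA_le w hb
  have hPLe := PP_le w hb
  have hFLe := FF_le w hb
  have hC1 := C1 w hb
  have hC2a := C2a w hsym
  have hP : 0 ≤ PP w := Finset.sum_nonneg fun x _ => sq_nonneg _
  -- C2' : A P − τ² ≤ n³ (n²A − P)
  have hC2' : AA w * PP w - tau w ^2 ≤ nn V ^3 * (nn V ^2 * AA w - PP w) := by
    have h1 : AA w * PP w - tau w ^2 ≤ AA w * (FF w * AA w - PP w) := by nlinarith [hC2a]
    have h2 : AA w * (FF w * AA w - PP w) ≤ AA w * (nn V ^2 * AA w - PP w) := by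
      nlinarith [hFLe, hA]
    have h3 : AA w * (nn V ^2 * AA w - PP w) ≤ nn V ^3 * (nn V ^2 * AA w - PP w) := by
      nlinarith [hALe, hPLe]
    linarith
  rcases eq_or_lt_of_le (nn_nonneg (V := V)) with h0 | h0
  · -- n = 0 : V is empty, all sums vanish
    have hcard : Fintype.card V = 0 := by
      have h : ((Fintype.card V : ℝ)) = 0 := h0.symm
      exact_mod_cast h
    have hVempty : IsEmpty V := Fintype.card_eq_zero_iff.mp hcard
    have hs : sig w = 0 := by unfold sig; rw [Finset.univ_eq_empty, Finset.sum_empty]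
    have hA0 : AA w = 0 := by unfold AA; rw [Finset.univ_eq_empty, Finset.sum_empty]
    have hP0 : PP w = 0 := by unfold PP; rw [Finset.univ_eq_empty, Finset.sum_empty]
    have ht0 : tau w = 0 := by unfold tau; rw [Finset.univ_eq_empty, Finset.sum_empty]
    rw [hs, hA0, hP0, ht0]; ring_nf; rfl
  · -- n > 0 : multiply by n² and use C1 + C2'
    have key : nn V ^2 * (nn V ^2 * sig w ^2 - 2 * sig w * tau w - 2 * nn V ^3 * AA w
        + 2 * nn V * PP w + AA w ^2) ≤ 0 := by nlinarith [hC1, hC2']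
    have hn2 : 0 < nn V ^ 2 := by positivity
    nlinarith [key, hn2]

end ineq

section expansion
variable (w : V → V → ℝ)

lemma sum_const_real (c : ℝ) : (∑ _x : V, c) = nn V * c := by
  rw [Finset.sum_const, Finset.card_univ, nsmul_eq_mul, nn]

lemma sum2_pull (c : ℝ) (f : V → V → ℝ) :
    (∑ x, ∑ y, c * f x y) = c * ∑ x, ∑ y, f x y := by
  rw [Finset.mul_sum]; exact Finset.sum_congr rfl fun x _ => by rw [Finset.mul_sum]

lemma sum3_pull (c : ℝ) (f : V → V → V → ℝ) :
    (∑ x, ∑ y, ∑ z, c * f x y z) = c * ∑ x, ∑ y, ∑ z, f x y z := by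
  rw [Finset.mul_sum]
  refine Finset.sum_congr rfl fun x _ => ?_
  rw [Finset.mul_sum]
  refine Finset.sum_congr rfl fun y _ => ?_
  rw [Finset.mul_sum]

/-- rotation of a triple sum -/
lemma sum3_rot (f : V → V → V → ℝ) :
    (∑ x, ∑ y, ∑ z, f x y z) = ∑ x, ∑ y, ∑ z, f y z x :=
  calc (∑ x, ∑ y, ∑ z, f x y z)
      = ∑ x, ∑ z, ∑ y, f x y z := Finset.sum_congr rfl fun x _ => Finset.sum_comm
    _ = ∑ z, ∑ x, ∑ y, f x y z := Finset.sum_comm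

lemma sum3_rot2 (f : V → V → V → ℝ) :
    (∑ x, ∑ y, ∑ z, f x y z) = ∑ x, ∑ y, ∑ z, f z x y :=
  (sum3_rot f).trans (sum3_rot (fun x y z => f y z x))

lemma sum3_swap12 (f : V → V → V → ℝ) :
    (∑ x, ∑ y, ∑ z, f x y z) = ∑ x, ∑ y, ∑ z, f y x z := Finset.sum_comm

lemma sum3_swap23 (f : V → V → V → ℝ) :
    (∑ x, ∑ y, ∑ z, f x y z) = ∑ x, ∑ y, ∑ z, f x z y :=
  Finset.sum_congr rfl fun x _ => Finset.sum_comm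

lemma sum3_swap13 (f : V → V → V → ℝ) :
    (∑ x, ∑ y, ∑ z, f x y z) = ∑ x, ∑ y, ∑ z, f z y x :=
  calc (∑ x, ∑ y, ∑ z, f x y z)
      = ∑ x, ∑ z, ∑ y, f x y z := Finset.sum_congr rfl fun x _ => Finset.sum_comm
    _ = ∑ z, ∑ x, ∑ y, f x y z := Finset.sum_comm
    _ = ∑ z, ∑ y, ∑ x, f x y z := Finset.sum_congr rfl fun z _ => Finset.sum_comm

lemma sum3_neg (F G : V → V → V → ℝ) (h : (∑ x, ∑ y, ∑ z, F x y z) = ∑ x, ∑ y, ∑ z, G x y z)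
    (hFG : ∀ x y z, G x y z = - F x y z) : (∑ x, ∑ y, ∑ z, F x y z) = 0 := by
  have h2 : (∑ x, ∑ y, ∑ z, G x y z) = ∑ x, ∑ y, ∑ z, (- F x y z) :=
    Finset.sum_congr rfl fun x _ => Finset.sum_congr rfl fun y _ =>
      Finset.sum_congr rfl fun z _ => hFG x y z
  simp only [Finset.sum_neg_distrib] at h2
  have := h.trans h2
  linarith

lemma sum_W2_total (hsym : ∀ x y, w x y = w y x) : (∑ x, ∑ y, W2 w x y) = AA w := by
  have h : ∀ x, (∑ y, W2 w x y) = ee w x := sum_W2_right w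
  simp_rw [h]
  exact sum_ee w hsym

def pC (w : V → V → ℝ) (x y : V) : ℝ := nn V - W2 w x y
def qC (w : V → V → ℝ) (x y : V) : ℝ := dd w y - dd w x

lemma hdW2_l : (∑ x, ∑ y, dd w x * W2 w x y) = tau w := by
  have h : ∀ x, (∑ y, dd w x * W2 w x y) = dd w x * ee w x := by
    intro x; rw [← Finset.mul_sum, sum_W2_right]
  simp_rw [h]; rfl

lemma hdW2_r (hsym : ∀ x y, w x y = w y x) : (∑ x, ∑ y, dd w y * W2 w x y) = tau w := by
  rw [Finset.sum_comm]
  have h : ∀ y, (∑ x, dd w y * W2 w x y) = dd w y * ee w y := by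
    intro y; rw [← Finset.mul_sum, sum_W2_left w hsym]
  simp_rw [h]; rfl

lemma hddW2 (hsym : ∀ x y, w x y = w y x) : (∑ x, ∑ y, dd w x * dd w y * W2 w x y) = PP w := by
  have h : ∀ x, (∑ y, dd w x * dd w y * W2 w x y) = dd w x * (∑ y, W2 w x y * dd w y) := by
    intro x; rw [Finset.mul_sum]; exact Finset.sum_congr rfl fun y _ => by ring
  simp_rw [h]
  exact dWWd w hsym

lemma hW2W2_y (hsym : ∀ x y, w x y = w y x) : (∑ x, ∑ y, ∑ z, W2 w x y * W2 w y z) = PP w := by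
  have h : ∀ x y, (∑ z, W2 w x y * W2 w y z) = W2 w x y * ee w y := by
    intro x y; rw [← Finset.mul_sum, sum_W2_right]
  simp_rw [h]
  rw [Finset.sum_comm]
  have h2 : ∀ y, (∑ x, W2 w x y * ee w y) = ee w y * ee w y := by
    intro y; rw [← Finset.sum_mul, sum_W2_left w hsym]
  simp_rw [h2]
  unfold PP; exact Finset.sum_congr rfl fun y _ => (sq (ee w y)).symm

lemma T0_eq (hsym : ∀ x y, w x y = w y x) : (∑ x, ∑ y, ∑ z, pC w x y * pC w y z * pC w z x)
    = nn V ^ 6 - 3 * nn V ^ 3 * AA w + 3 * nn V * PP w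
      - (∑ x, ∑ y, ∑ z, W2 w x y * W2 w y z * W2 w z x) := by
  have hexp : ∀ x y z, pC w x y * pC w y z * pC w z x
      = nn V ^ 3 - nn V ^2 * W2 w x y - nn V ^2 * W2 w y z - nn V ^2 * W2 w z x
        + nn V * (W2 w x y * W2 w y z) + nn V * (W2 w y z * W2 w z x)
        + nn V * (W2 w z x * W2 w x y)
        - W2 w x y * W2 w y z * W2 w z x := by
    intro x y z; unfold pC; ring
  simp_rw [hexp]
  simp only [Finset.sum_add_distrib, Finset.sum_sub_distrib]
  have hS0 : (∑ _x : V, ∑ _y : V, ∑ _z : V, nn V ^ 3) = nn V ^ 6 := by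
    simp only [sum_const_real]; ring
  have hS1 : (∑ x : V, ∑ y : V, ∑ _z : V, nn V ^2 * W2 w x y) = nn V ^3 * AA w := by
    simp only [sum_const_real]
    have h : ∀ x y : V, nn V * (nn V ^2 * W2 w x y) = nn V ^3 * W2 w x y := fun x y => by ring
    simp_rw [h]
    rw [sum2_pull, sum_W2_total w hsym]
  have hS2 : (∑ _x : V, ∑ y : V, ∑ z : V, nn V ^2 * W2 w y z) = nn V ^3 * AA w := by
    rw [sum_const_real]
    have h : ∀ y z : V, nn V ^2 * W2 w y z = nn V ^2 * W2 w y z := fun _ _ => rfl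
    rw [sum2_pull, sum_W2_total w hsym]; ring
  have hS3 : (∑ x : V, ∑ _y : V, ∑ z : V, nn V ^2 * W2 w z x) = nn V ^3 * AA w := by
    simp only [sum_const_real]
    have h : ∀ x : V, nn V * (∑ z, nn V ^2 * W2 w z x) = nn V ^3 * ∑ z, W2 w z x := by
      intro x; rw [Finset.mul_sum, Finset.mul_sum]
      exact Finset.sum_congr rfl fun z _ => by ring
    simp_rw [h]
    rw [← Finset.mul_sum]
    have h2 : (∑ x, ∑ z, W2 w z x) = AA w := Finset.sum_comm.trans (sum_W2_total w hsym)
    rw [h2]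
  have hS4 : (∑ x : V, ∑ y : V, ∑ z : V, nn V * (W2 w x y * W2 w y z)) = nn V * PP w := by
    rw [sum3_pull, hW2W2_y w hsym]
  have hS5 : (∑ x : V, ∑ y : V, ∑ z : V, nn V * (W2 w y z * W2 w z x)) = nn V * PP w := by
    rw [sum3_pull]
    rw [← sum3_rot (fun x y z => W2 w x y * W2 w y z), hW2W2_y w hsym]
  have hS6 : (∑ x : V, ∑ y : V, ∑ z : V, nn V * (W2 w z x * W2 w x y)) = nn V * PP w := by
    rw [sum3_pull]
    rw [← sum3_rot2 (fun x y z => W2 w x y * W2 w y z), hW2W2_y w hsym]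
  rw [hS0, hS1, hS2, hS3, hS4, hS5, hS6]
  ring

lemma sum_dd_dd : (∑ y : V, ∑ z : V, dd w y * dd w z) = sig w * sig w := by
  have h : ∀ y, (∑ z, dd w y * dd w z) = dd w y * sig w := by
    intro y; rw [← Finset.mul_sum]; rfl
  simp_rw [h]
  rw [← Finset.sum_mul]; rfl

lemma sum_dd_sq' : (∑ y : V, dd w y * dd w y) = AA w := by
  unfold AA; exact Finset.sum_congr rfl fun y _ => (pow_two (dd w y)).symm

lemma sum_inner2 (hsym : ∀ x y, w x y = w y x) : (∑ x : V, ∑ z : V, dd w z * W2 w z x) = tau w := by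
  rw [Finset.sum_comm]
  have h : ∀ z, (∑ x, dd w z * W2 w z x) = dd w z * ee w z := by
    intro z; rw [← Finset.mul_sum, sum_W2_right]
  simp_rw [h]; rfl

lemma U1_eq (hsym : ∀ x y, w x y = w y x) :
    (∑ x, ∑ y, ∑ z, qC w x y * qC w y z * pC w z x)
    = nn V ^2 * sig w ^2 - 2 * sig w * tau w - nn V ^3 * AA w + AA w ^2 + nn V * PP w := by
  have hexp : ∀ x y z, qC w x y * qC w y z * pC w z x
      = nn V * (dd w y * dd w z) - nn V * (dd w y * dd w y) - nn V * (dd w x * dd w z)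
        + nn V * (dd w x * dd w y) - dd w y * (dd w z * W2 w z x)
        + (dd w y * dd w y) * W2 w z x + dd w x * (dd w z * W2 w z x)
        - dd w x * (dd w y * W2 w z x) := by
    intro x y z; unfold qC pC; ring
  simp_rw [hexp]
  simp only [Finset.sum_add_distrib, Finset.sum_sub_distrib]
  have hU1 : (∑ _x : V, ∑ y : V, ∑ z : V, nn V * (dd w y * dd w z))
      = nn V * (nn V * (sig w * sig w)) := by
    rw [sum_const_real, sum2_pull, sum_dd_dd]
  have hU2 : (∑ _x : V, ∑ y : V, ∑ _z : V, nn V * (dd w y * dd w y))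
      = nn V * (nn V * (nn V * AA w)) := by
    rw [sum_const_real]
    have h : ∀ y : V, (∑ _z : V, nn V * (dd w y * dd w y))
        = nn V * (nn V * (dd w y * dd w y)) := fun y => by rw [sum_const_real]
    simp_rw [h]
    have h2 : ∀ y : V, nn V * (nn V * (dd w y * dd w y)) = (nn V * nn V) * (dd w y * dd w y) :=
      fun y => by ring
    simp_rw [h2]
    rw [← Finset.mul_sum, sum_dd_sq']
    ring
  have hU3 : (∑ x : V, ∑ _y : V, ∑ z : V, nn V * (dd w x * dd w z))
      = nn V * (nn V * (sig w * sig w)) := by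
    have h : ∀ x : V, (∑ _y : V, ∑ z : V, nn V * (dd w x * dd w z))
        = nn V * ∑ z, nn V * (dd w x * dd w z) := fun x => by rw [sum_const_real]
    simp_rw [h]
    have h2 : ∀ x : V, (∑ z, nn V * (dd w x * dd w z)) = (nn V * dd w x) * sig w := by
      intro x
      have h3 : ∀ z, nn V * (dd w x * dd w z) = (nn V * dd w x) * dd w z := fun z => by ring
      simp_rw [h3]
      rw [← Finset.mul_sum]; rfl
    simp_rw [h2]
    have h4 : ∀ x : V, nn V * ((nn V * dd w x) * sig w) = (nn V * nn V * sig w) * dd w x :=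
      fun x => by ring
    simp_rw [h4]
    rw [← Finset.mul_sum]
    have h5 : (∑ x, dd w x) = sig w := rfl
    rw [h5]; ring
  have hU4 : (∑ x : V, ∑ y : V, ∑ _z : V, nn V * (dd w x * dd w y))
      = nn V * (nn V * (sig w * sig w)) := by
    have h : ∀ x y : V, (∑ _z : V, nn V * (dd w x * dd w y))
        = nn V * (nn V * (dd w x * dd w y)) := fun x y => by rw [sum_const_real]
    simp_rw [h]
    have h2 : ∀ x y : V, nn V * (nn V * (dd w x * dd w y))
        = (nn V * nn V) * (dd w x * dd w y) := fun x y => by ring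
    simp_rw [h2]
    rw [sum2_pull, sum_dd_dd]
    ring
  have hU5 : (∑ x : V, ∑ y : V, ∑ z : V, dd w y * (dd w z * W2 w z x)) = sig w * tau w := by
    have h : ∀ x y : V, (∑ z, dd w y * (dd w z * W2 w z x))
        = dd w y * ∑ z, dd w z * W2 w z x := fun x y => by rw [Finset.mul_sum]
    simp_rw [h]
    have h2 : ∀ x : V, (∑ y, dd w y * ∑ z, dd w z * W2 w z x)
        = sig w * ∑ z, dd w z * W2 w z x := fun x => by rw [← Finset.sum_mul]; rfl
    simp_rw [h2]
    rw [← Finset.mul_sum, sum_inner2 w hsym]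
  have hU6 : (∑ x : V, ∑ y : V, ∑ z : V, (dd w y * dd w y) * W2 w z x) = AA w * AA w := by
    have h : ∀ x y : V, (∑ z, (dd w y * dd w y) * W2 w z x)
        = (dd w y * dd w y) * ee w x := fun x y => by
          rw [← Finset.mul_sum, sum_W2_left w hsym]
    simp_rw [h]
    have h2 : ∀ x : V, (∑ y, (dd w y * dd w y) * ee w x) = AA w * ee w x := fun x => by
      rw [← Finset.sum_mul, sum_dd_sq']
    simp_rw [h2]
    rw [← Finset.mul_sum, sum_ee w hsym]
  have hU7 : (∑ x : V, ∑ y : V, ∑ z : V, dd w x * (dd w z * W2 w z x)) = nn V * PP w := by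
    have h : ∀ x : V, (∑ _y : V, ∑ z, dd w x * (dd w z * W2 w z x))
        = nn V * ∑ z, dd w x * (dd w z * W2 w z x) := fun x => by rw [sum_const_real]
    simp_rw [h]
    rw [← Finset.mul_sum]
    congr 1
    have h2 : ∀ x, (∑ z, dd w x * (dd w z * W2 w z x)) = dd w x * ∑ z, W2 w x z * dd w z := by
      intro x
      rw [Finset.mul_sum]
      exact Finset.sum_congr rfl fun z _ => by rw [W2_symm w hsym x z]; ring
    simp_rw [h2]
    exact dWWd w hsym
  have hU8 : (∑ x : V, ∑ y : V, ∑ z : V, dd w x * (dd w y * W2 w z x)) = sig w * tau w := by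
    have h : ∀ x y : V, (∑ z, dd w x * (dd w y * W2 w z x))
        = dd w x * (dd w y * ee w x) := by
      intro x y
      have h1 : ∀ z, dd w x * (dd w y * W2 w z x) = (dd w x * dd w y) * W2 w z x :=
        fun z => by ring
      simp_rw [h1]
      rw [← Finset.mul_sum, sum_W2_left w hsym]; ring
    simp_rw [h]
    have h2 : ∀ x : V, (∑ y, dd w x * (dd w y * ee w x)) = sig w * (dd w x * ee w x) := by
      intro x
      have h1 : ∀ y, dd w x * (dd w y * ee w x) = dd w y * (dd w x * ee w x) := fun y => by ring
      simp_rw [h1]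
      rw [← Finset.sum_mul]; rfl
    simp_rw [h2]
    rw [← Finset.mul_sum]; rfl
  rw [hU1, hU2, hU3, hU4, hU5, hU6, hU7, hU8]
  ring

lemma T_split (hsym : ∀ x y, w x y = w y x) :
    (∑ x, ∑ y, ∑ z, (pC w x y + qC w x y) * (pC w y z + qC w y z) * (pC w z x + qC w z x))
    = (∑ x, ∑ y, ∑ z, pC w x y * pC w y z * pC w z x)
      + 3 * ∑ x, ∑ y, ∑ z, qC w x y * qC w y z * pC w z x := by
  have hps : ∀ x y, pC w x y = pC w y x := fun x y => by unfold pC; rw [W2_symm w hsym]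
  have hqa : ∀ x y, qC w x y = - qC w y x := fun x y => by unfold qC; ring
  have hexp : ∀ x y z, (pC w x y + qC w x y) * (pC w y z + qC w y z) * (pC w z x + qC w z x)
      = pC w x y * pC w y z * pC w z x
        + qC w x y * pC w y z * pC w z x
        + pC w x y * qC w y z * pC w z x
        + pC w x y * pC w y z * qC w z x
        + qC w x y * qC w y z * pC w z x
        + qC w x y * pC w y z * qC w z x
        + pC w x y * qC w y z * qC w z x
        + qC w x y * qC w y z * qC w z x := fun x y z => by ring
  simp_rw [hexp]
  simp only [Finset.sum_add_distrib]
  have hZ1 : (∑ x, ∑ y, ∑ z, qC w x y * pC w y z * pC w z x) = 0 := by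
    refine sum3_neg _ (fun x y z => qC w y x * pC w x z * pC w z y) (sum3_swap12 _) ?_
    intro x y z
    rw [hqa y x, hps x z, hps z y]; ring
  have hZ2 : (∑ x, ∑ y, ∑ z, pC w x y * qC w y z * pC w z x) = 0 := by
    refine sum3_neg _ (fun x y z => pC w x z * qC w z y * pC w y x) (sum3_swap23 _) ?_
    intro x y z
    rw [hqa z y, hps x z, hps y x]; ring
  have hZ3 : (∑ x, ∑ y, ∑ z, pC w x y * pC w y z * qC w z x) = 0 := by
    refine sum3_neg _ (fun x y z => pC w z y * pC w y x * qC w x z) (sum3_swap13 _) ?_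
    intro x y z
    rw [hqa x z, hps z y, hps y x]; ring
  have hZ4 : (∑ x, ∑ y, ∑ z, qC w x y * qC w y z * qC w z x) = 0 := by
    refine sum3_neg _ (fun x y z => qC w y x * qC w x z * qC w z y) (sum3_swap12 _) ?_
    intro x y z
    rw [hqa y x, hqa x z, hqa z y]; ring
  have hE1 : (∑ x, ∑ y, ∑ z, qC w x y * pC w y z * qC w z x)
      = ∑ x, ∑ y, ∑ z, qC w x y * qC w y z * pC w z x := by
    rw [sum3_rot (fun x y z => qC w x y * pC w y z * qC w z x)]
    exact Finset.sum_congr rfl fun x _ => Finset.sum_congr rfl fun y _ =>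
      Finset.sum_congr rfl fun z _ => by ring
  have hE2 : (∑ x, ∑ y, ∑ z, pC w x y * qC w y z * qC w z x)
      = ∑ x, ∑ y, ∑ z, qC w x y * qC w y z * pC w z x := by
    rw [sum3_rot2 (fun x y z => pC w x y * qC w y z * qC w z x)]
    exact Finset.sum_congr rfl fun x _ => Finset.sum_congr rfl fun y _ =>
      Finset.sum_congr rfl fun z _ => by ring
  rw [hZ1, hZ2, hZ3, hZ4, hE1, hE2]
  ring

lemma c6_nonneg (hsym : ∀ x y, w x y = w y x) :
    0 ≤ ∑ x, ∑ y, ∑ z, W2 w x y * W2 w y z * W2 w z x := by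
  have key : (∑ x, ∑ y, ∑ z, W2 w x y * W2 w y z * W2 w z x)
      = ∑ a, ∑ b, (∑ c, W2 w a c * w c b) ^ 2 := by
    have h1 : ∀ a b : V, (∑ c, W2 w a c * w c b) ^ 2
        = ∑ c, ∑ e, (W2 w a c * W2 w a e) * (w c b * w e b) := by
      intro a b
      rw [pow_two, Finset.sum_mul_sum]
      exact Finset.sum_congr rfl fun c _ => Finset.sum_congr rfl fun e _ => by ring
    simp_rw [h1]
    have h2 : ∀ a, (∑ b, ∑ c, ∑ e, (W2 w a c * W2 w a e) * (w c b * w e b))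
        = ∑ c, ∑ e, ∑ b, (W2 w a c * W2 w a e) * (w c b * w e b) := fun a =>
      sum3_rot2 (fun b c e => (W2 w a c * W2 w a e) * (w c b * w e b))
    simp_rw [h2]
    have h3 : ∀ a c e : V, (∑ b, (W2 w a c * W2 w a e) * (w c b * w e b))
        = (W2 w a c * W2 w a e) * W2 w c e := by
      intro a c e
      rw [← Finset.mul_sum]
      congr 1
      exact Finset.sum_congr rfl fun b _ => by rw [hsym e b]
    simp_rw [h3]
    exact Finset.sum_congr rfl fun x _ => Finset.sum_congr rfl fun y _ =>
      Finset.sum_congr rfl fun z _ => by rw [W2_symm w hsym z x]; ring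
  rw [key]
  exact Finset.sum_nonneg fun a _ => Finset.sum_nonneg fun b _ => sq_nonneg _

theorem key_bound (hsym : ∀ x y, w x y = w y x) (hb : ∀ x y, w x y ^ 2 ≤ 1) :
    (∑ x, ∑ y, ∑ z, (pC w x y + qC w x y) * (pC w y z + qC w y z) * (pC w z x + qC w z x))
      ≤ nn V ^ 6 := by
  rw [T_split w hsym, T0_eq w hsym, U1_eq w hsym]
  have h1 := core_ineq w hsym hb
  have h2 := c6_nonneg w hsym
  linarith

end expansion


section counting
open scoped Classical
variable {V : Type} [Fintype V] (G : ECGraph V)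

noncomputable def r0 (x y : V) : ℝ := if G.graph.Adj x y ∧ G.color x y = true then 1 else 0
noncomputable def b0 (x y : V) : ℝ := if G.graph.Adj x y ∧ G.color x y = false then 1 else 0
noncomputable def wG (x y : V) : ℝ := r0 G x y - b0 G x y

lemma r0_mem (x y : V) : r0 G x y = 0 ∨ r0 G x y = 1 := by
  unfold r0; split <;> simp
lemma b0_mem (x y : V) : b0 G x y = 0 ∨ b0 G x y = 1 := by
  unfold b0; split <;> simp
lemma r0_nonneg (x y : V) : 0 ≤ r0 G x y := by rcases r0_mem G x y with h | h <;> rw [h] <;> norm_num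
lemma b0_nonneg (x y : V) : 0 ≤ b0 G x y := by rcases b0_mem G x y with h | h <;> rw [h] <;> norm_num

lemma r0_symm (x y : V) : r0 G x y = r0 G y x := by
  unfold r0
  rw [G.color_symm x y]
  by_cases h : G.graph.Adj x y
  · have h2 := G.graph.adj_symm h
    by_cases hc : G.color y x = true <;> simp [h, h2, hc]
  · have h2 : ¬ G.graph.Adj y x := fun hy => h (G.graph.adj_symm hy)
    simp [h, h2]

lemma b0_symm (x y : V) : b0 G x y = b0 G y x := by
  unfold b0
  rw [G.color_symm x y]
  by_cases h : G.graph.Adj x y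
  · have h2 := G.graph.adj_symm h
    by_cases hc : G.color y x = false <;> simp [h, h2, hc]
  · have h2 : ¬ G.graph.Adj y x := fun hy => h (G.graph.adj_symm hy)
    simp [h, h2]

lemma wG_symm : ∀ x y, wG G x y = wG G y x := by
  intro x y; unfold wG; rw [r0_symm, b0_symm]

lemma rb_le_one (x y : V) : r0 G x y + b0 G x y ≤ 1 := by
  unfold r0 b0
  by_cases h1 : G.graph.Adj x y ∧ G.color x y = true <;>
    by_cases h2 : G.graph.Adj x y ∧ G.color x y = false <;>
      simp [h1, h2]

lemma wG_sq_le : ∀ x y, wG G x y ^ 2 ≤ 1 := by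
  intro x y
  have h1 := r0_mem G x y
  have h2 := b0_mem G x y
  unfold wG
  rcases h1 with h1 | h1 <;> rcases h2 with h2 | h2 <;> rw [h1, h2] <;> norm_num

/-- the upper kernels -/
noncomputable def rr (x y : V) : ℝ := (1 + wG G x y) / 2
noncomputable def bb (x y : V) : ℝ := (1 - wG G x y) / 2

lemma r0_le_rr (x y : V) : r0 G x y ≤ rr G x y := by
  have h := rb_le_one G x y
  unfold rr wG
  linarith

lemma b0_le_bb (x y : V) : b0 G x y ≤ bb G x y := by
  have h := rb_le_one G x y
  unfold bb wG
  linarith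

lemma rr_nonneg (x y : V) : 0 ≤ rr G x y := by
  have h := wG_sq_le G x y
  unfold rr
  nlinarith [sq_nonneg (1 + wG G x y)]

lemma bb_nonneg (x y : V) : 0 ≤ bb G x y := by
  have h := wG_sq_le G x y
  unfold bb
  nlinarith [sq_nonneg (1 - wG G x y)]

lemma isHom_iff (f : Fin 6 → V) : IsHom C6A G f ↔
    ((G.graph.Adj (f 0) (f 1) ∧ G.color (f 0) (f 1) = true) ∧
     (G.graph.Adj (f 1) (f 2) ∧ G.color (f 1) (f 2) = false) ∧
     (G.graph.Adj (f 2) (f 3) ∧ G.color (f 2) (f 3) = true) ∧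
     (G.graph.Adj (f 3) (f 4) ∧ G.color (f 3) (f 4) = false) ∧
     (G.graph.Adj (f 4) (f 5) ∧ G.color (f 4) (f 5) = true) ∧
     (G.graph.Adj (f 5) (f 0) ∧ G.color (f 5) (f 0) = false)) := by
  constructor
  · intro h
    have a01 : C6A.graph.Adj 0 1 := show (cycleGraph 6).Adj 0 1 by decide
    have a12 : C6A.graph.Adj 1 2 := show (cycleGraph 6).Adj 1 2 by decide
    have a23 : C6A.graph.Adj 2 3 := show (cycleGraph 6).Adj 2 3 by decide
    have a34 : C6A.graph.Adj 3 4 := show (cycleGraph 6).Adj 3 4 by decide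
    have a45 : C6A.graph.Adj 4 5 := show (cycleGraph 6).Adj 4 5 by decide
    have a50 : C6A.graph.Adj 5 0 := show (cycleGraph 6).Adj 5 0 by decide
    exact ⟨⟨(h 0 1 a01).1, (h 0 1 a01).2.trans (by decide : C6A.color 0 1 = true)⟩,
      ⟨(h 1 2 a12).1, (h 1 2 a12).2.trans (by decide : C6A.color 1 2 = false)⟩,
      ⟨(h 2 3 a23).1, (h 2 3 a23).2.trans (by decide : C6A.color 2 3 = true)⟩,
      ⟨(h 3 4 a34).1, (h 3 4 a34).2.trans (by decide : C6A.color 3 4 = false)⟩,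
      ⟨(h 4 5 a45).1, (h 4 5 a45).2.trans (by decide : C6A.color 4 5 = true)⟩,
      ⟨(h 5 0 a50).1, (h 5 0 a50).2.trans (by decide : C6A.color 5 0 = false)⟩⟩
  · rintro ⟨h01, h12, h23, h34, h45, h50⟩ u v huv
    have huv' : (cycleGraph 6).Adj u v := huv
    clear huv
    fin_cases u <;> fin_cases v <;>
      first
      | exact absurd huv' (by decide)
      | exact ⟨h01.1, h01.2.trans (by decide : (true:Bool) = C6A.color 0 1)⟩
      | exact ⟨h12.1, h12.2.trans (by decide : (false:Bool) = C6A.color 1 2)⟩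
      | exact ⟨h23.1, h23.2.trans (by decide : (true:Bool) = C6A.color 2 3)⟩
      | exact ⟨h34.1, h34.2.trans (by decide : (false:Bool) = C6A.color 3 4)⟩
      | exact ⟨h45.1, h45.2.trans (by decide : (true:Bool) = C6A.color 4 5)⟩
      | exact ⟨h50.1, h50.2.trans (by decide : (false:Bool) = C6A.color 5 0)⟩
      | exact ⟨G.graph.adj_symm h01.1,
          (G.color_symm (f 1) (f 0)).trans (h01.2.trans (by decide : (true:Bool) = C6A.color 1 0))⟩
      | exact ⟨G.graph.adj_symm h12.1,
          (G.color_symm (f 2) (f 1)).trans (h12.2.trans (by decide : (false:Bool) = C6A.color 2 1))⟩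
      | exact ⟨G.graph.adj_symm h23.1,
          (G.color_symm (f 3) (f 2)).trans (h23.2.trans (by decide : (true:Bool) = C6A.color 3 2))⟩
      | exact ⟨G.graph.adj_symm h34.1,
          (G.color_symm (f 4) (f 3)).trans (h34.2.trans (by decide : (false:Bool) = C6A.color 4 3))⟩
      | exact ⟨G.graph.adj_symm h45.1,
          (G.color_symm (f 5) (f 4)).trans (h45.2.trans (by decide : (true:Bool) = C6A.color 5 4))⟩
      | exact ⟨G.graph.adj_symm h50.1,
          (G.color_symm (f 0) (f 5)).trans (h50.2.trans (by decide : (false:Bool) = C6A.color 0 5))⟩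

lemma cond_of_r0 {x y : V} (h : r0 G x y ≠ 0) : G.graph.Adj x y ∧ G.color x y = true := by
  unfold r0 at h
  by_contra hc
  rw [if_neg hc] at h
  exact h rfl

lemma cond_of_b0 {x y : V} (h : b0 G x y ≠ 0) : G.graph.Adj x y ∧ G.color x y = false := by
  unfold b0 at h
  by_contra hc
  rw [if_neg hc] at h
  exact h rfl

def tup6 : (Fin 6 → V) ≃ (V × V × V × V × V × V) where
  toFun f := (f 1, f 3, f 5, f 0, f 2, f 4)
  invFun p := ![p.2.2.2.1, p.1, p.2.2.2.2.1, p.2.1, p.2.2.2.2.2, p.2.2.1]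
  left_inv f := by funext i; fin_cases i <;> rfl
  right_inv p := rfl

lemma card_eq_sum :
    (Nat.card {f : Fin 6 → V // IsHom C6A G f} : ℝ)
    = ∑ x1 : V, ∑ x3 : V, ∑ x5 : V, ∑ x0 : V, ∑ x2 : V, ∑ x4 : V,
        r0 G x0 x1 * b0 G x1 x2 * r0 G x2 x3 * b0 G x3 x4 * r0 G x4 x5 * b0 G x5 x0 := by
  have hf : ∀ f : Fin 6 → V, (if IsHom C6A G f then (1:ℝ) else 0)
      = r0 G (f 0) (f 1) * b0 G (f 1) (f 2) * r0 G (f 2) (f 3) * b0 G (f 3) (f 4)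
        * r0 G (f 4) (f 5) * b0 G (f 5) (f 0) := by
    intro f
    by_cases h : IsHom C6A G f
    · rw [if_pos h]
      obtain ⟨h1, h2, h3, h4, h5, h6⟩ := (isHom_iff G f).mp h
      unfold r0 b0
      rw [if_pos h1, if_pos h2, if_pos h3, if_pos h4, if_pos h5, if_pos h6]
      norm_num
    · rw [if_neg h]
      rcases eq_or_ne (r0 G (f 0) (f 1)) 0 with h1 | h1
      · rw [h1]; ring
      rcases eq_or_ne (b0 G (f 1) (f 2)) 0 with h2 | h2
      · rw [h2]; ring
      rcases eq_or_ne (r0 G (f 2) (f 3)) 0 with h3 | h3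
      · rw [h3]; ring
      rcases eq_or_ne (b0 G (f 3) (f 4)) 0 with h4 | h4
      · rw [h4]; ring
      rcases eq_or_ne (r0 G (f 4) (f 5)) 0 with h5 | h5
      · rw [h5]; ring
      rcases eq_or_ne (b0 G (f 5) (f 0)) 0 with h6 | h6
      · rw [h6]; ring
      exact absurd ((isHom_iff G f).mpr ⟨cond_of_r0 G h1, cond_of_b0 G h2, cond_of_r0 G h3,
        cond_of_b0 G h4, cond_of_r0 G h5, cond_of_b0 G h6⟩) h
  have step1 : (Nat.card {f : Fin 6 → V // IsHom C6A G f} : ℝ)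
      = ∑ f : Fin 6 → V, if IsHom C6A G f then (1:ℝ) else 0 := by
    rw [Nat.card_eq_fintype_card, Fintype.card_subtype, Finset.sum_boole]
  rw [step1]
  simp_rw [hf]
  rw [Fintype.sum_equiv (tup6 (V := V))
    (fun f => r0 G (f 0) (f 1) * b0 G (f 1) (f 2) * r0 G (f 2) (f 3) * b0 G (f 3) (f 4)
        * r0 G (f 4) (f 5) * b0 G (f 5) (f 0))
    (fun p => r0 G p.2.2.2.1 p.1 * b0 G p.1 p.2.2.2.2.1 * r0 G p.2.2.2.2.1 p.2.1
        * b0 G p.2.1 p.2.2.2.2.2 * r0 G p.2.2.2.2.2 p.2.2.1 * b0 G p.2.2.1 p.2.2.2.1)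
    (fun f => rfl)]
  simp only [Fintype.sum_prod_type]

noncomputable def mm (a c : V) : ℝ := ∑ z, bb G a z * rr G z c

lemma mm_eq (a c : V) : mm G a c = (pC (wG G) a c + qC (wG G) a c) / 4 := by
  unfold mm bb rr pC qC
  have h : ∀ z, (1 - wG G a z)/2 * ((1 + wG G z c)/2)
      = ((1:ℝ) + wG G z c - wG G a z - wG G a z * wG G z c)/4 := fun z => by ring
  simp_rw [h]
  rw [← Finset.sum_div]
  have e1 : (∑ z : V, ((1:ℝ) + wG G z c - wG G a z - wG G a z * wG G z c))
      = nn V + dd (wG G) c - dd (wG G) a - W2 (wG G) a c := by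
    simp only [Finset.sum_add_distrib, Finset.sum_sub_distrib]
    have e2 : (∑ _z : V, (1:ℝ)) = nn V := by rw [sum_const_real]; ring
    have e3 : (∑ z, wG G z c) = dd (wG G) c := by
      unfold dd; exact Finset.sum_congr rfl fun z _ => wG_symm G z c
    have e4 : (∑ z, wG G a z) = dd (wG G) a := rfl
    have e5 : (∑ z, wG G a z * wG G z c) = W2 (wG G) a c := rfl
    rw [e2, e3, e4, e5]
  rw [e1]
  ring

theorem main_bound :
    (Nat.card {f : Fin 6 → V // IsHom C6A G f} : ℝ) ≤ nn V ^ 6 / 64 := by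
  rw [card_eq_sum]
  have hmono : (∑ x1 : V, ∑ x3 : V, ∑ x5 : V, ∑ x0 : V, ∑ x2 : V, ∑ x4 : V,
        r0 G x0 x1 * b0 G x1 x2 * r0 G x2 x3 * b0 G x3 x4 * r0 G x4 x5 * b0 G x5 x0)
      ≤ ∑ x1 : V, ∑ x3 : V, ∑ x5 : V, ∑ x0 : V, ∑ x2 : V, ∑ x4 : V,
        rr G x0 x1 * bb G x1 x2 * rr G x2 x3 * bb G x3 x4 * rr G x4 x5 * bb G x5 x0 := by
    refine Finset.sum_le_sum fun x1 _ => Finset.sum_le_sum fun x3 _ =>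
      Finset.sum_le_sum fun x5 _ => Finset.sum_le_sum fun x0 _ =>
      Finset.sum_le_sum fun x2 _ => Finset.sum_le_sum fun x4 _ => ?_
    refine mul_le_mul (mul_le_mul (mul_le_mul (mul_le_mul (mul_le_mul
      (r0_le_rr G x0 x1) (b0_le_bb G x1 x2) (b0_nonneg G x1 x2) (rr_nonneg G x0 x1))
      (r0_le_rr G x2 x3) (r0_nonneg G x2 x3)
      (mul_nonneg (rr_nonneg G x0 x1) (bb_nonneg G x1 x2)))
      (b0_le_bb G x3 x4) (b0_nonneg G x3 x4)
      (mul_nonneg (mul_nonneg (rr_nonneg G x0 x1) (bb_nonneg G x1 x2)) (rr_nonneg G x2 x3)))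
      (r0_le_rr G x4 x5) (r0_nonneg G x4 x5)
      (mul_nonneg (mul_nonneg (mul_nonneg (rr_nonneg G x0 x1) (bb_nonneg G x1 x2))
        (rr_nonneg G x2 x3)) (bb_nonneg G x3 x4)))
      (b0_le_bb G x5 x0) (b0_nonneg G x5 x0)
      (mul_nonneg (mul_nonneg (mul_nonneg (mul_nonneg (rr_nonneg G x0 x1) (bb_nonneg G x1 x2))
        (rr_nonneg G x2 x3)) (bb_nonneg G x3 x4)) (rr_nonneg G x4 x5))
  refine hmono.trans ?_
  have hinner : ∀ x1 x3 x5 : V, (∑ x0 : V, ∑ x2 : V, ∑ x4 : V,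
        rr G x0 x1 * bb G x1 x2 * rr G x2 x3 * bb G x3 x4 * rr G x4 x5 * bb G x5 x0)
      = mm G x5 x1 * (mm G x1 x3 * mm G x3 x5) := by
    intro x1 x3 x5
    have h1 : ∀ x0 x2 : V, (∑ x4 : V,
          rr G x0 x1 * bb G x1 x2 * rr G x2 x3 * bb G x3 x4 * rr G x4 x5 * bb G x5 x0)
        = ((bb G x5 x0 * rr G x0 x1) * (bb G x1 x2 * rr G x2 x3)) * mm G x3 x5 := by
      intro x0 x2
      have hp : ∀ x4, rr G x0 x1 * bb G x1 x2 * rr G x2 x3 * bb G x3 x4 * rr G x4 x5 * bb G x5 x0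
          = ((bb G x5 x0 * rr G x0 x1) * (bb G x1 x2 * rr G x2 x3)) * (bb G x3 x4 * rr G x4 x5) :=
        fun x4 => by ring
      simp_rw [hp]
      rw [← Finset.mul_sum]
      rfl
    simp_rw [h1]
    have h2 : ∀ x0 : V, (∑ x2 : V,
          ((bb G x5 x0 * rr G x0 x1) * (bb G x1 x2 * rr G x2 x3)) * mm G x3 x5)
        = ((bb G x5 x0 * rr G x0 x1) * mm G x3 x5) * mm G x1 x3 := by
      intro x0
      have hp : ∀ x2, ((bb G x5 x0 * rr G x0 x1) * (bb G x1 x2 * rr G x2 x3)) * mm G x3 x5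
          = ((bb G x5 x0 * rr G x0 x1) * mm G x3 x5) * (bb G x1 x2 * rr G x2 x3) :=
        fun x2 => by ring
      simp_rw [hp]
      rw [← Finset.mul_sum]
      rfl
    simp_rw [h2]
    have hp : ∀ x0, ((bb G x5 x0 * rr G x0 x1) * mm G x3 x5) * mm G x1 x3
        = (mm G x3 x5 * mm G x1 x3) * (bb G x5 x0 * rr G x0 x1) := fun x0 => by ring
    simp_rw [hp]
    rw [← Finset.mul_sum]
    have : (∑ x0, bb G x5 x0 * rr G x0 x1) = mm G x5 x1 := rfl
    rw [this]
    ring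
  simp_rw [hinner]
  have hpoint : ∀ x y z : V, mm G z x * (mm G x y * mm G y z)
      = (1/64 : ℝ) * ((pC (wG G) x y + qC (wG G) x y) * (pC (wG G) y z + qC (wG G) y z)
          * (pC (wG G) z x + qC (wG G) z x)) := by
    intro x y z
    rw [mm_eq, mm_eq, mm_eq]
    ring
  simp_rw [hpoint]
  rw [sum3_pull]
  have hkey := key_bound (wG G) (wG_symm G) (wG_sq_le G)
  have h64 : (0:ℝ) < 1/64 := by norm_num
  calc (1/64 : ℝ) * (∑ x, ∑ y, ∑ z, (pC (wG G) x y + qC (wG G) x y)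
        * (pC (wG G) y z + qC (wG G) y z) * (pC (wG G) z x + qC (wG G) z x))
      ≤ (1/64) * nn V ^ 6 := by nlinarith [hkey]
    _ = nn V ^ 6 / 64 := by ring

end counting

end AltC6

/-- Main theorem: every edge-coloured graph `G` satisfies `t(C_6^A, G) ≤ (1/2)^6`. -/
theorem homDensity_C6A_le :
    ∀ (V : Type) [Fintype V] (G : ECGraph V), homDensity C6A G ≤ (1 / 2 : ℝ) ^ 6 := by
  intro V _ G
  unfold homDensity
  have hcard : (Fintype.card (Fin 6)) = 6 := by simp
  rw [hcard]
  have hb := AltC6.main_bound G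
  have hn : (0:ℝ) ≤ (Fintype.card V : ℝ) := Nat.cast_nonneg _
  rcases eq_or_lt_of_le hn with h0 | h0
  · rw [← h0]
    norm_num
  · have hpow : (0:ℝ) < (Fintype.card V : ℝ)^6 := by positivity
    rw [div_le_iff₀ hpow]
    have hnn : AltC6.nn V = (Fintype.card V : ℝ) := rfl
    rw [hnn] at hb
    nlinarith [hb]
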